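/- For the discrete Laplacian on Z, the function ψ(x) = C(-1)^{|x|} e^{-k|x|} with C > 0 and k > 0 satisfies -ω ψ(x) = -Δψ(x) - δ_{0x}·a·ψ(0) for all x ∈ Z if and only if cosh k = -(ω+2)/2 and sinh k = -a/2 (in particular ω < -4 and a < 0). -/

import Mathlib

/-- Characterization of the second family of solitary waves (ω < -4) of the
discrete Schrödinger equation coupled to an oscillator at x = 0: the profile
ψ(x) = C (-1)^{|x|} e^{-k|x|} (C > 0, k > 0) satisfies
-ω ψ(x) = -Δψ(x) - δ_{0x} a ψ(0) for all x ∈ ℤ iff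
cosh k = -(ω+2)/2 and sinh k = -a/2 (in particular ω < -4 and a < 0). -/
theorem solitary_wave_char_neg (C ω a k : ℝ) (hC : 0 < C) (hk : 0 < k)
    (ψ : ℤ → ℝ) (hψ : ∀ x : ℤ, ψ x = C * (-1 : ℝ) ^ x.natAbs * Real.exp (-k * |(x : ℝ)|)) :
    (∀ x : ℤ, -(ω * ψ x) =
        -(ψ (x + 1) - 2 * ψ x + ψ (x - 1)) - (if x = 0 then (1:ℝ) else 0) * (a * ψ 0))
      ↔ (Real.cosh k = -(ω + 2) / 2 ∧ Real.sinh k = -a / 2 ∧ ω < -4 ∧ a < 0) := by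
  set e := Real.exp (-k) with he
  have he0 : 0 < e := Real.exp_pos _
  have he' : e ≠ 0 := ne_of_gt he0
  have hC' : C ≠ 0 := ne_of_gt hC
  have he1 : e < 1 := by
    rw [he, ← Real.exp_zero]
    exact Real.exp_lt_exp.mpr (by linarith)
  have hek : Real.exp k = 1 / e := by
    rw [he, one_div, ← Real.exp_neg, neg_neg]
  have hcosh : Real.cosh k = (1 / e + e) / 2 := by
    rw [Real.cosh_eq, hek, he]
  have hsinh : Real.sinh k = (1 / e - e) / 2 := by
    rw [Real.sinh_eq, hek, he]
  have h1e : (1 / e) * e = 1 := by field_simp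
  -- rewrite ψ in terms of r = -e
  have hψ' : ∀ x : ℤ, ψ x = C * (-e) ^ x.natAbs := by
    intro x
    rw [hψ x]
    have habs : |(x : ℝ)| = (x.natAbs : ℝ) := by rw [Nat.cast_natAbs, Int.cast_abs]
    rw [habs, neg_pow]
    have : Real.exp (-k * (x.natAbs : ℝ)) = e ^ x.natAbs := by
      rw [mul_comm, Real.exp_nat_mul]
    rw [this]
    ring
  have hψnat : ∀ n : ℕ, ψ (n : ℤ) = C * (-e) ^ n := by
    intro n; rw [hψ' n, Int.natAbs_natCast]
  have hψneg : ∀ n : ℕ, ψ (-(n : ℤ)) = C * (-e) ^ n := by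
    intro n; rw [hψ' (-(n : ℤ)), Int.natAbs_neg, Int.natAbs_natCast]
  have e0 : ψ 0 = C := by rw [hψ' 0]; norm_num
  have e1 : ψ 1 = C * (-e) := by rw [hψ' 1]; norm_num
  have em1 : ψ (-1) = C * (-e) := by rw [hψ' (-1)]; norm_num
  have e2 : ψ 2 = C * (-e) ^ 2 := by rw [hψ' 2]; norm_num
  constructor
  · intro h
    have h1 := h 1
    have h0 := h 0
    rw [show (1 : ℤ) + 1 = 2 by ring, show (1 : ℤ) - 1 = 0 by ring] at h1
    rw [e0, e1, e2, if_neg (by norm_num)] at h1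
    rw [show (0 : ℤ) + 1 = 1 by ring, show (0 : ℤ) - 1 = -1 by ring] at h0
    rw [e0, e1, em1, if_pos rfl] at h0
    have hc1 : (ω * e) * C = (-(e ^ 2 + 2 * e + 1)) * C := by linear_combination h1
    have h1' : ω * e = -(e ^ 2 + 2 * e + 1) := mul_right_cancel₀ hC' hc1
    have hω : ω = -(e + 2 + 1 / e) := by
      field_simp
      linear_combination h1'
    have hc0 : (-ω) * C = (2 * e + 2 - a) * C := by linear_combination h0
    have h0' : -ω = 2 * e + 2 - a := mul_right_cancel₀ hC' hc0
    have ha : a = e - 1 / e := by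
      rw [hω] at h0'
      field_simp at h0' ⊢
      linarith
    refine ⟨by rw [hcosh, hω]; ring, by rw [hsinh, ha]; ring, ?_, ?_⟩
    · rw [hω]
      nlinarith [mul_pos (sub_pos.mpr he1) (sub_pos.mpr he1), h1e]
    · rw [ha]
      nlinarith [mul_pos (sub_pos.mpr he1) (sub_pos.mpr he1), h1e]
  · rintro ⟨h1, h2, -, -⟩
    have hω : ω = -(e + 2 + 1 / e) := by
      rw [hcosh] at h1
      field_simp at h1 ⊢
      linarith
    have ha : a = e - 1 / e := by
      rw [hsinh] at h2
      field_simp at h2 ⊢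
      linarith
    intro x
    rcases Int.eq_nat_or_neg x with ⟨n, rfl | rfl⟩
    · cases n with
      | zero =>
        simp only [Nat.cast_zero, if_pos rfl, eq_self_iff_true, ↓reduceIte]
        rw [show (0 : ℤ) + 1 = 1 by ring, show (0 : ℤ) - 1 = -1 by ring,
          e1, em1, e0, hω, ha]
        field_simp
        ring
      | succ m =>
        have hx0 : ((m + 1 : ℕ) : ℤ) ≠ 0 := by push_cast; omega
        rw [if_neg hx0]
        have hp1 : ((m + 1 : ℕ) : ℤ) + 1 = ((m + 2 : ℕ) : ℤ) := by push_cast; ring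
        have hm1 : ((m + 1 : ℕ) : ℤ) - 1 = ((m : ℕ) : ℤ) := by push_cast; ring
        rw [hp1, hm1, hψnat (m + 2), hψnat (m + 1), hψnat m, hω]
        have hre : (-(e + 2 + 1 / e) + 2) * (-e) = e ^ 2 + 1 := by field_simp; ring
        have key : C * (-e) ^ (m + 2) + C * (-e) ^ m = (-(e + 2 + 1 / e) + 2) * (C * (-e) ^ (m + 1)) := by
          have h' : (-(e + 2 + 1 / e) + 2) * (C * (-e) ^ (m + 1)) =
              ((-(e + 2 + 1 / e) + 2) * (-e)) * (C * (-e) ^ m) := by ring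
          rw [h', hre]; ring
        linarith [key]
    · cases n with
      | zero =>
        simp only [Nat.cast_zero, neg_zero, if_pos rfl, eq_self_iff_true, ↓reduceIte]
        rw [show (0 : ℤ) + 1 = 1 by ring, show (0 : ℤ) - 1 = -1 by ring,
          e1, em1, e0, hω, ha]
        field_simp
        ring
      | succ m =>
        have hx0 : (-((m + 1 : ℕ) : ℤ)) ≠ 0 := by push_cast; omega
        rw [if_neg hx0]
        have hp1 : -((m + 1 : ℕ) : ℤ) + 1 = -((m : ℕ) : ℤ) := by push_cast; ring
        have hm1 : -((m + 1 : ℕ) : ℤ) - 1 = -((m + 2 : ℕ) : ℤ) := by push_cast; ring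
        rw [hp1, hm1, hψneg (m + 2), hψneg (m + 1), hψneg m, hω]
        have hre : (-(e + 2 + 1 / e) + 2) * (-e) = e ^ 2 + 1 := by field_simp; ring
        have key : C * (-e) ^ m + C * (-e) ^ (m + 2) = (-(e + 2 + 1 / e) + 2) * (C * (-e) ^ (m + 1)) := by
          have h' : (-(e + 2 + 1 / e) + 2) * (C * (-e) ^ (m + 1)) =
              ((-(e + 2 + 1 / e) + 2) * (-e)) * (C * (-e) ^ m) := by ring
          rw [h', hre]; ring
        linarith [key]
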